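/- With notation as in the alternating-sum lemma, for every non-crossing perfect matching a ∈ B^n, the sum over all arcs e ∈ a of the classes [e] in M/N equals [(1,2)] + [(3,4)] + ... + [(2n-1, 2n)], independent of a. -/

import Mathlib

def IsMatching (n : ℕ) (f : ℕ → ℕ) : Prop :=
  (∀ m, 1 ≤ m → m ≤ 2 * n → (1 ≤ f m ∧ f m ≤ 2 * n ∧ f (f m) = m ∧ f m ≠ m)) ∧
  (∀ m, (m < 1 ∨ 2 * n < m) → f m = m)

def NonCrossing (f : ℕ → ℕ) : Prop :=
  ¬ ∃ i j k l : ℕ, i < j ∧ j < k ∧ k < l ∧ f i = k ∧ f j = l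

def MoveAt (a b : ℕ → ℕ) (i j k l : ℕ) : Prop :=
  i < j ∧ j < k ∧ k < l ∧
  a i = j ∧ a j = i ∧ a k = l ∧ a l = k ∧
  b i = l ∧ b l = i ∧ b j = k ∧ b k = j ∧
  ∀ m, m ∉ ({i, j, k, l} : Set ℕ) → b m = a m

def Move (a b : ℕ → ℕ) : Prop := ∃ i j k l, MoveAt a b i j k l

/-- A non-crossing matching together with a distinguished (undotted) arc,
recorded by its two endpoints in increasing order. -/
def Idx (n : ℕ) : Type :=
  {q : (ℕ → ℕ) × ℕ × ℕ //
    IsMatching n q.1 ∧ NonCrossing q.1 ∧ q.2.1 < q.2.2 ∧ q.1 q.2.1 = q.2.2}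

/-- The free `ℤ`-module on pairs (matching, distinguished arc). -/
abbrev M (n : ℕ) := Idx n →₀ ℤ

/-- Generators of the submodule `N`: Type II elements `(a,e) - (b,e)` for a nesting
move `a → b` fixing the distinguished arc `e`, and Type I elements
`(a,{i,j}) + (a,{k,l}) - (b,{i,l}) - (b,{j,k})` for a move via `{i,j},{k,l} ↦ {i,l},{j,k}`. -/
def NGen (n : ℕ) : Set (M n) :=
  {x | (∃ p q : Idx n, Move p.1.1 q.1.1 ∧ p.1.2 = q.1.2 ∧
          x = Finsupp.single p 1 - Finsupp.single q 1) ∨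
       (∃ p₁ p₂ p₃ p₄ : Idx n, ∃ i j k l : ℕ,
          MoveAt p₁.1.1 p₃.1.1 i j k l ∧
          p₁.1.1 = p₂.1.1 ∧ p₃.1.1 = p₄.1.1 ∧
          p₁.1.2 = (i, j) ∧ p₂.1.2 = (k, l) ∧ p₃.1.2 = (i, l) ∧ p₄.1.2 = (j, k) ∧
          x = Finsupp.single p₁ 1 + Finsupp.single p₂ 1
              - Finsupp.single p₃ 1 - Finsupp.single p₄ 1)}

noncomputable def NSub (n : ℕ) : Submodule ℤ (M n) := Submodule.span ℤ (NGen n)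


namespace St10

variable {n : ℕ} {f : ℕ → ℕ}

lemma range_of_ne (hm : IsMatching n f) {m : ℕ} (h : f m ≠ m) : 1 ≤ m ∧ m ≤ 2 * n := by
  by_contra hc
  exact h (hm.2 m (by omega))

lemma arc_symm (hm : IsMatching n f) {p q : ℕ} (hne : p ≠ q) (h : f p = q) : f q = p := by
  have hr := range_of_ne hm (m := p) (by omega)
  have := (hm.1 p hr.1 hr.2).2.2.1
  rwa [h] at this

/-- points strictly inside an arc are matched strictly inside -/
lemma inside (hm : IsMatching n f) (hnc : NonCrossing f) {p q m : ℕ}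
    (hpq : p < q) (hfp : f p = q)
    (hm1 : p < m) (hm2 : m < q) : p < f m ∧ f m < q := by
  have hrp := range_of_ne hm (m := p) (by omega)
  have hq : q ≤ 2 * n := by have := (hm.1 p hrp.1 hrp.2).2.1; omega
  obtain ⟨hf1, hf2, hff, hne⟩ := hm.1 m (by omega) (by omega)
  have hfq : f q = p := arc_symm hm (by omega) hfp
  have hmp : f m ≠ p := fun h => by
    have : f (f m) = q := by rw [h, hfp]
    omega
  have hmq : f m ≠ q := fun h => by
    have : f (f m) = p := by rw [h, hfq]
    omega
  constructor
  · by_contra hlt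
    push_neg at hlt
    exact hnc ⟨f m, p, m, q, by omega, by omega, by omega, by rw [hff], hfp⟩
  · by_contra hlt
    push_neg at hlt
    exact hnc ⟨p, m, q, f m, by omega, by omega, by omega, hfp, rfl⟩

/-- the un-nesting of b at (i,l) ⊃ (j,k) : result has arcs (i,j),(k,l). -/
def unnest (b : ℕ → ℕ) (i j k l : ℕ) : ℕ → ℕ := fun m =>
  if m = i then j else if m = j then i else if m = k then l else if m = l then k else b m

section Unnest

variable {b : ℕ → ℕ} {i j k l : ℕ}
  (hij : i < j) (hjk : j < k) (hkl : k < l)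
  (hbi : b i = l) (hbj : b j = k) (hbm : IsMatching n b)

include hij hjk hkl hbi hbj hbm

lemma unnest_bounds : 1 ≤ i ∧ l ≤ 2 * n := by
  have h1 := range_of_ne hbm (m := i) (by omega)
  have := (hbm.1 i h1.1 h1.2).2.1
  omega

lemma unnest_moveAt : MoveAt (unnest b i j k l) b i j k l := by
  have hbl : b l = i := arc_symm hbm (by omega) hbi
  have hbk : b k = j := arc_symm hbm (by omega) hbj
  refine ⟨hij, hjk, hkl, ?_, ?_, ?_, ?_, hbi, hbl, hbj, hbk, ?_⟩
  · show (if i = i then j else _) = j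
    rw [if_pos rfl]
  · show (if j = i then j else if j = j then i else _) = i
    rw [if_neg (by omega), if_pos rfl]
  · show (if k = i then j else if k = j then i else if k = k then l else _) = l
    rw [if_neg (by omega), if_neg (by omega), if_pos rfl]
  · show (if l = i then j else if l = j then i else if l = k then l else if l = l then k else b l) = k
    rw [if_neg (by omega), if_neg (by omega), if_neg (by omega), if_pos rfl]
  · intro m hm
    simp only [Set.mem_insert_iff, Set.mem_singleton_iff, not_or] at hm
    show b m = if m = i then j else if m = j then i else if m = k then l else if m = l then k else b m
    rw [if_neg hm.1, if_neg hm.2.1, if_neg hm.2.2.1, if_neg hm.2.2.2]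

lemma unnest_matching : IsMatching n (unnest b i j k l) := by
  have hbnds := unnest_bounds hij hjk hkl hbi hbj hbm
  have hbl : b l = i := arc_symm hbm (by omega) hbi
  have hbk : b k = j := arc_symm hbm (by omega) hbj
  have hMA := unnest_moveAt hij hjk hkl hbi hbj hbm
  obtain ⟨_, _, _, hai, haj, hak, hal, _, _, _, _, hrest⟩ := hMA
  constructor
  · intro m hm1 hm2
    by_cases hmi : m = i
    · subst hmi; rw [hai]; exact ⟨by omega, by omega, by rw [haj], by omega⟩
    by_cases hmj : m = j
    · subst hmj; rw [haj]; exact ⟨by omega, by omega, by rw [hai], by omega⟩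
    by_cases hmk : m = k
    · subst hmk; rw [hak]; exact ⟨by omega, by omega, by rw [hal], by omega⟩
    by_cases hml : m = l
    · subst hml; rw [hal]; exact ⟨by omega, by omega, by rw [hak], by omega⟩
    have heq : unnest b i j k l m = b m := (hrest m (by simp [hmi, hmj, hmk, hml])).symm
    obtain ⟨g1, g2, g3, g4⟩ := hbm.1 m hm1 hm2
    have h5 : b m ≠ i := fun h => by rw [h, hbi] at g3; omega
    have h6 : b m ≠ j := fun h => by rw [h, hbj] at g3; omega
    have h7 : b m ≠ k := fun h => by rw [h, hbk] at g3; omega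
    have h8 : b m ≠ l := fun h => by rw [h, hbl] at g3; omega
    have heq2 : unnest b i j k l (b m) = b (b m) := (hrest (b m) (by simp [h5, h6, h7, h8])).symm
    rw [heq, heq2]
    exact ⟨g1, g2, g3, g4⟩
  · intro m hm
    have : unnest b i j k l m = b m :=
      (hrest m (by simp only [Set.mem_insert_iff, Set.mem_singleton_iff]; omega)).symm
    rw [this]
    exact hbm.2 m hm


lemma unnest_nc_left (hbnc : NonCrossing b) (hj : i + 1 = j) :
    NonCrossing (unnest b i j k l) := by
  have hMA := unnest_moveAt hij hjk hkl hbi hbj hbm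
  obtain ⟨_, _, _, hai, haj, hak, hal, _, hbl, _, hbk, hrest⟩ := hMA
  rintro ⟨x, y, z, w, hxy, hyz, hzw, haxz, hayw⟩
  set a := unnest b i j k l with hadef
  have hmem : ∀ m : ℕ, m ≠ i → m ≠ j → m ≠ k → m ≠ l → a m = b m := fun m h1 h2 h3 h4 =>
    (hrest m (by simp only [Set.mem_insert_iff, Set.mem_singleton_iff]; push_neg; exact ⟨h1, h2, h3, h4⟩)).symm
  -- determine x's case
  by_cases hxi : x = i
  · subst hxi; rw [hai] at haxz; omega
  by_cases hxj : x = j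
  · subst hxj; rw [haj] at haxz; omega
  by_cases hxk : x = k
  · -- z = l, y strictly inside (k,l)
    subst hxk; rw [hak] at haxz; subst haxz
    have hy4 : a y = b y := hmem y (by omega) (by omega) (by omega) (by omega)
    rw [hy4] at hayw
    exact hbnc ⟨i, y, l, w, by omega, by omega, by omega, hbi, hayw⟩
  by_cases hxl : x = l
  · subst hxl; rw [hal] at haxz; omega
  have hx4 : a x = b x := hmem x (by omega) (by omega) (by omega) (by omega)
  rw [hx4] at haxz
  -- now x is an old arc; determine y's case
  by_cases hyi : y = i
  · subst hyi; rw [hai] at hayw; omega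
  by_cases hyj : y = j
  · subst hyj; rw [haj] at hayw; omega
  by_cases hyk : y = k
  · -- w = l, x < k < z < l, b x = z
    subst hyk; rw [hak] at hayw; subst hayw
    by_cases hxi' : x < i
    · exact hbnc ⟨x, i, z, l, by omega, by omega, by omega, haxz, hbi⟩
    · -- x > j
      exact hbnc ⟨j, x, y, z, by omega, by omega, by omega, hbj, haxz⟩
  by_cases hyl : y = l
  · subst hyl; rw [hal] at hayw; omega
  have hy4 : a y = b y := hmem y (by omega) (by omega) (by omega) (by omega)
  rw [hy4] at hayw
  exact hbnc ⟨x, y, z, w, hxy, hyz, hzw, haxz, hayw⟩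

lemma unnest_nc_right (hbnc : NonCrossing b) (hk : k + 1 = l) :
    NonCrossing (unnest b i j k l) := by
  have hMA := unnest_moveAt hij hjk hkl hbi hbj hbm
  obtain ⟨_, _, _, hai, haj, hak, hal, _, hbl, _, hbk, hrest⟩ := hMA
  rintro ⟨x, y, z, w, hxy, hyz, hzw, haxz, hayw⟩
  set a := unnest b i j k l with hadef
  have hmem : ∀ m : ℕ, m ≠ i → m ≠ j → m ≠ k → m ≠ l → a m = b m := fun m h1 h2 h3 h4 =>
    (hrest m (by simp only [Set.mem_insert_iff, Set.mem_singleton_iff]; push_neg; exact ⟨h1, h2, h3, h4⟩)).symm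
  by_cases hxi : x = i
  · -- z = j, y strictly inside (i,j)
    subst hxi; rw [hai] at haxz; subst haxz
    have hy4 : a y = b y := hmem y (by omega) (by omega) (by omega) (by omega)
    rw [hy4] at hayw
    have hbw : b w = y := arc_symm hbm (by omega) hayw
    have hwk : w ≠ k := by rintro rfl; rw [hbk] at hbw; omega
    have hwl : w ≠ l := by rintro rfl; rw [hbl] at hbw; omega
    by_cases hw2 : w < k
    · exact hbnc ⟨y, j, w, k, by omega, by omega, by omega, hayw, hbj⟩
    · exact hbnc ⟨x, y, l, w, by omega, by omega, by omega, hbi, hayw⟩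
  by_cases hxj : x = j
  · subst hxj; rw [haj] at haxz; omega
  by_cases hxk : x = k
  · subst hxk; rw [hak] at haxz; omega
  by_cases hxl : x = l
  · subst hxl; rw [hal] at haxz; omega
  have hx4 : a x = b x := hmem x (by omega) (by omega) (by omega) (by omega)
  rw [hx4] at haxz
  by_cases hyi : y = i
  · subst hyi; rw [hai] at hayw; subst hayw
    exact hbnc ⟨x, y, z, l, by omega, by omega, by omega, haxz, hbi⟩
  by_cases hyj : y = j
  · subst hyj; rw [haj] at hayw; omega
  by_cases hyk : y = k
  · subst hyk; rw [hak] at hayw; omega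
  by_cases hyl : y = l
  · subst hyl; rw [hal] at hayw; omega
  have hy4 : a y = b y := hmem y (by omega) (by omega) (by omega) (by omega)
  rw [hy4] at hayw
  exact hbnc ⟨x, y, z, w, hxy, hyz, hzw, haxz, hayw⟩

end Unnest

end St10


namespace St10

variable {n : ℕ}

open Classical in
noncomputable def cls (n : ℕ) (f : ℕ → ℕ) (x : ℕ) : M n ⧸ NSub n :=
  if h : IsMatching n f ∧ NonCrossing f ∧ x < f x then
    Submodule.Quotient.mk (Finsupp.single (⟨(f, x, f x), h.1, h.2.1, h.2.2, rfl⟩ : Idx n) 1)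
  else 0

lemma cls_eq_mk {f : ℕ → ℕ} {x y : ℕ} (h1 : IsMatching n f) (h2 : NonCrossing f)
    (hlt : x < y) (hxy : f x = y) :
    cls n f x = Submodule.Quotient.mk (p := NSub n)
      (Finsupp.single (⟨(f, x, y), h1, h2, hlt, hxy⟩ : Idx n) 1) := by
  subst hxy
  rw [cls, dif_pos ⟨h1, h2, hlt⟩]

lemma cls_eq_zero {f : ℕ → ℕ} {x : ℕ} (h : ¬ x < f x) : cls n f x = 0 := by
  rw [cls, dif_neg (by tauto)]

/-- Type II relation on classes -/
lemma cls_typeII {a b : ℕ → ℕ} (hma : IsMatching n a) (hnca : NonCrossing a)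
    (hmb : IsMatching n b) (hncb : NonCrossing b) (hmv : Move a b)
    {x y : ℕ} (hlt : x < y) (hax : a x = y) (hbx : b x = y) :
    cls n a x = cls n b x := by
  rw [cls_eq_mk hma hnca hlt hax, cls_eq_mk hmb hncb hlt hbx]
  rw [Submodule.Quotient.eq]
  exact Submodule.subset_span (Or.inl ⟨⟨(a, x, y), hma, hnca, hlt, hax⟩,
    ⟨(b, x, y), hmb, hncb, hlt, hbx⟩, hmv, rfl, rfl⟩)

/-- Type I relation on classes -/
lemma cls_typeI {a b : ℕ → ℕ} (hma : IsMatching n a) (hnca : NonCrossing a)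
    (hmb : IsMatching n b) (hncb : NonCrossing b) {i j k l : ℕ}
    (hmv : MoveAt a b i j k l) :
    cls n a i + cls n a k = cls n b i + cls n b j := by
  obtain ⟨hij, hjk, hkl, hai, haj, hak, hal, hbi, hbl, hbj, hbk, hrest⟩ := hmv
  rw [cls_eq_mk hma hnca hij hai, cls_eq_mk hma hnca (by omega) hak,
    cls_eq_mk hmb hncb (by omega) hbi, cls_eq_mk hmb hncb hjk hbj]
  rw [← Submodule.Quotient.mk_add, ← Submodule.Quotient.mk_add, Submodule.Quotient.eq]
  set P1 : Idx n := ⟨(a, i, j), hma, hnca, hij, hai⟩ with hP1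
  set P2 : Idx n := ⟨(a, k, l), hma, hnca, by exact hkl, hak⟩ with hP2
  set P3 : Idx n := ⟨(b, i, l), hmb, hncb, by exact hij.trans (hjk.trans hkl), hbi⟩ with hP3
  set P4 : Idx n := ⟨(b, j, k), hmb, hncb, hjk, hbj⟩ with hP4
  have hx : (Finsupp.single P1 (1 : ℤ) + Finsupp.single P2 1 +
      -(Finsupp.single P3 1 + Finsupp.single P4 1)) ∈ NGen n := by
    refine Or.inr ⟨P1, P2, P3, P4, i, j, k, l,
      ⟨hij, hjk, hkl, hai, haj, hak, hal, hbi, hbl, hbj, hbk, hrest⟩,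
      rfl, rfl, rfl, rfl, rfl, rfl, ?_⟩
    abel
  have := Submodule.subset_span (R := ℤ) hx
  rw [SetLike.mem_coe] at this
  convert this using 1
  all_goals first | rfl | abel

end St10

namespace St10

variable {n : ℕ}

noncomputable def S (n : ℕ) (f : ℕ → ℕ) : M n ⧸ NSub n :=
  ∑ m ∈ Finset.Icc 1 (2 * n), cls n f m

def mu (n : ℕ) (f : ℕ → ℕ) : ℕ :=
  ∑ m ∈ Finset.Icc 1 (2 * n), max (f m) m

section MoveFacts

variable {a b : ℕ → ℕ} {i j k l : ℕ}
  (hma : IsMatching n a) (hnca : NonCrossing a)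
  (hmb : IsMatching n b) (hncb : NonCrossing b)
  (hMA : MoveAt a b i j k l)

include hma hmb hMA

omit hma in lemma move_bounds : 1 ≤ i ∧ l ≤ 2 * n := by
  obtain ⟨hij, hjk, hkl, hai, haj, hak, hal, hbi, hbl, hbj, hbk, hrest⟩ := hMA
  have h1 := range_of_ne hmb (m := i) (by omega)
  have := (hmb.1 i h1.1 h1.2).2.1
  rw [hbi] at this
  omega

omit hma in lemma s4_subset : ({i, j, k, l} : Finset ℕ) ⊆ Finset.Icc 1 (2 * n) := by
  have hb := move_bounds hmb hMA
  obtain ⟨hij, hjk, hkl, _⟩ := hMA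
  intro m hm
  simp only [Finset.mem_insert, Finset.mem_singleton] at hm
  rw [Finset.mem_Icc]
  omega

omit hma hmb hMA in lemma s4_eq : ({i, j, k, l} : Finset ℕ) = insert i (insert j (insert k {l})) := rfl

omit hma hmb in lemma sum_s4 {β : Type*} [AddCommMonoid β] (g : ℕ → β) :
    ∑ m ∈ ({i, j, k, l} : Finset ℕ), g m = g i + g j + g k + g l := by
  obtain ⟨hij, hjk, hkl, _⟩ := hMA
  rw [s4_eq, Finset.sum_insert (by simp; omega), Finset.sum_insert (by simp; omega),
    Finset.sum_insert (by simp; omega), Finset.sum_singleton]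
  abel

omit hma in lemma mu_lt : mu n a < mu n b := by
  have hsub := s4_subset hmb hMA
  have hsa := sum_s4 hMA (fun m => max (a m) m)
  have hsb := sum_s4 hMA (fun m => max (b m) m)
  obtain ⟨hij, hjk, hkl, hai, haj, hak, hal, hbi, hbl, hbj, hbk, hrest⟩ := hMA
  have hbase : ∀ m ∈ Finset.Icc 1 (2 * n) \ ({i, j, k, l} : Finset ℕ),
      max (a m) m = max (b m) m := by
    intro m hm
    simp only [Finset.mem_sdiff, Finset.mem_insert, Finset.mem_singleton, not_or] at hm
    rw [hrest m (by simp only [Set.mem_insert_iff, Set.mem_singleton_iff]; tauto)]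
  have ha' : mu n a = (∑ m ∈ Finset.Icc 1 (2 * n) \ ({i, j, k, l} : Finset ℕ),
      max (a m) m) + (max (a i) i + max (a j) j + max (a k) k + max (a l) l) := by
    rw [mu, ← Finset.sum_sdiff hsub, hsa]
  have hb' : mu n b = (∑ m ∈ Finset.Icc 1 (2 * n) \ ({i, j, k, l} : Finset ℕ),
      max (b m) m) + (max (b i) i + max (b j) j + max (b k) k + max (b l) l) := by
    rw [mu, ← Finset.sum_sdiff hsub, hsb]
  rw [ha', hb', Finset.sum_congr rfl hbase]
  rw [hai, haj, hak, hal, hbi, hbj, hbk, hbl]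
  have e1 : max j i = j := by omega
  have e2 : max i j = j := by omega
  have e3 : max l k = l := by omega
  have e4 : max k l = l := by omega
  have e5 : max l i = l := by omega
  have e6 : max k j = k := by omega
  have e7 : max j k = k := by omega
  have e8 : max i l = l := by omega
  rw [e1, e2, e3, e4, e5, e6, e7, e8]
  omega

include hnca hncb

lemma S_move : S n a = S n b := by
  have hsub := s4_subset hmb hMA
  have hsa := sum_s4 hMA (cls n a)
  have hsb := sum_s4 hMA (cls n b)
  have hmv : Move a b := ⟨i, j, k, l, hMA⟩
  obtain ⟨hij, hjk, hkl, hai, haj, hak, hal, hbi, hbl, hbj, hbk, hrest⟩ := hMA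
  have hbase : ∀ m ∈ Finset.Icc 1 (2 * n) \ ({i, j, k, l} : Finset ℕ),
      cls n a m = cls n b m := by
    intro m hm
    simp only [Finset.mem_sdiff, Finset.mem_insert, Finset.mem_singleton, not_or] at hm
    have hab : b m = a m := hrest m (by simp only [Set.mem_insert_iff, Set.mem_singleton_iff]; tauto)
    by_cases hlt : m < a m
    · exact cls_typeII hma hnca hmb hncb hmv hlt rfl hab
    · rw [cls_eq_zero hlt, cls_eq_zero (show ¬ m < b m by omega)]
  have ha' : S n a = (∑ m ∈ Finset.Icc 1 (2 * n) \ ({i, j, k, l} : Finset ℕ),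
      cls n a m) + (cls n a i + cls n a j + cls n a k + cls n a l) := by
    rw [S, ← Finset.sum_sdiff hsub, hsa]
  have hb' : S n b = (∑ m ∈ Finset.Icc 1 (2 * n) \ ({i, j, k, l} : Finset ℕ),
      cls n b m) + (cls n b i + cls n b j + cls n b k + cls n b l) := by
    rw [S, ← Finset.sum_sdiff hsub, hsb]
  rw [ha', hb', Finset.sum_congr rfl hbase]
  rw [cls_eq_zero (show ¬ j < a j by omega), cls_eq_zero (show ¬ l < a l by omega),
    cls_eq_zero (show ¬ k < b k by omega), cls_eq_zero (show ¬ l < b l by omega)]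
  have := cls_typeI hma hnca hmb hncb
    ⟨hij, hjk, hkl, hai, haj, hak, hal, hbi, hbl, hbj, hbk, hrest⟩
  simp only [add_zero]
  rw [this]

end MoveFacts

end St10

namespace St10

variable {n : ℕ} {f : ℕ → ℕ}

def a0 (n : ℕ) : ℕ → ℕ := fun m =>
  if 1 ≤ m ∧ m ≤ 2 * n then (if m % 2 = 1 then m + 1 else m - 1) else m

lemma a0_odd {m : ℕ} (h1 : 1 ≤ m) (h2 : m ≤ 2 * n) (h : m % 2 = 1) : a0 n m = m + 1 := by
  unfold a0
  rw [if_pos ⟨h1, h2⟩, if_pos h]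

lemma a0_even {m : ℕ} (h1 : 1 ≤ m) (h2 : m ≤ 2 * n) (h : m % 2 = 0) : a0 n m = m - 1 := by
  unfold a0
  rw [if_pos ⟨h1, h2⟩, if_neg (by omega)]

lemma a0_matching : IsMatching n (a0 n) := by
  constructor
  · intro m h1 h2
    rcases Nat.mod_two_eq_zero_or_one m with hm2 | hm2
    · have e1 : a0 n m = m - 1 := a0_even h1 h2 hm2
      rw [e1, a0_odd (by omega) (by omega) (by omega)]
      refine ⟨by omega, by omega, by omega, by omega⟩
    · have e1 : a0 n m = m + 1 := a0_odd h1 h2 hm2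
      have hle : m + 1 ≤ 2 * n := by omega
      rw [e1, a0_even (by omega) hle (by omega)]
      refine ⟨by omega, by omega, by omega, by omega⟩
  · intro m hm
    unfold a0
    rw [if_neg (by omega)]

lemma a0_le (m : ℕ) : a0 n m ≤ m + 1 := by
  unfold a0
  split_ifs <;> omega

lemma a0_nc : NonCrossing (a0 n) := by
  rintro ⟨i, j, k, l, hij, hjk, hkl, hik, hjl⟩
  have := a0_le (n := n) i
  omega

/-- a matching with all arcs short is `a0`. -/
lemma shorts_eq_a0 (hm : IsMatching n f)
    (H : ∀ m, 1 ≤ m → m ≤ 2 * n → f m = m + 1 ∨ f m = m - 1) : f = a0 n := by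
  have C : ∀ m, 1 ≤ m → m ≤ 2 * n → f m = (if m % 2 = 1 then m + 1 else m - 1) := by
    intro m
    induction m using Nat.strong_induction_on with
    | _ m IH =>
      intro h1 h2
      rcases Nat.mod_two_eq_zero_or_one m with hpar | hpar
      · -- even: use m - 1 odd
        have hm2 : 2 ≤ m := by omega
        have hIH := IH (m - 1) (by omega) (by omega) (by omega)
        have hf : f (m - 1) = m := by rw [hIH, if_pos (by omega)]; omega
        have hsym := arc_symm hm (show m - 1 ≠ m by omega) hf
        rw [if_neg (by omega)]
        exact hsym
      · rw [if_pos (by omega)]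
        rcases H m h1 h2 with h | h
        · exact h
        · exfalso
          by_cases h1' : m = 1
          · have := (hm.1 m h1 h2).1
            omega
          · have hIH := IH (m - 1) (by omega) (by omega) (by omega)
            have hf : f (m - 1) = m - 2 := by rw [hIH, if_neg (by omega)]; omega
            have h2' : f (m - 1) = m := arc_symm hm (by omega) h
            omega
  funext m
  by_cases hr : 1 ≤ m ∧ m ≤ 2 * n
  · rw [C m hr.1 hr.2]
    unfold a0
    rw [if_pos hr]
  · rw [hm.2 m (by omega)]
    unfold a0
    rw [if_neg hr]

end St10

namespace St10

variable {n : ℕ} {f : ℕ → ℕ}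

lemma no_long_shorts (hm : IsMatching n f)
    (hL : ∀ p, 1 ≤ p → p ≤ 2 * n → f p ≤ p + 1) :
    ∀ m, 1 ≤ m → m ≤ 2 * n → f m = m + 1 ∨ f m = m - 1 := by
  intro m h1 h2
  obtain ⟨g1, g2, g3, g4⟩ := hm.1 m h1 h2
  rcases lt_trichotomy m (f m) with h | h | h
  · left
    have := hL m h1 h2
    omega
  · omega
  · right
    have := hL (f m) g1 g2
    rw [g3] at this
    omega

lemma S_chain (N : ℕ) : ∀ f, IsMatching n f → NonCrossing f → mu n f = N →
    S n f = S n (a0 n) := by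
  induction N using Nat.strong_induction_on with
  | _ N IH =>
  intro f hm hnc hmu
  by_cases hL : ∃ p, 1 ≤ p ∧ p ≤ 2 * n ∧ p + 1 < f p
  · obtain ⟨p, hp1, hp2, hplong⟩ := hL
    set q := f p with hq
    have hq2 : q ≤ 2 * n := (hm.1 p hp1 hp2).2.1
    have hr := inside hm hnc (show p < q by omega) hq.symm
      (show p < p + 1 by omega) (show p + 1 < q by omega)
    set r := f (p + 1) with hrdef
    have hrne : r ≠ p + 1 := (hm.1 (p + 1) (by omega) (by omega)).2.2.2
    have h1 : p + 1 < r := by omega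
    have h2 : r < q := hr.2
    have hij : p < p + 1 := by omega
    have hMA := unnest_moveAt (n := n) hij h1 h2 hq.symm hrdef.symm hm
    have hm' := unnest_matching (n := n) hij h1 h2 hq.symm hrdef.symm hm
    have hnc' := unnest_nc_left (n := n) hij h1 h2 hq.symm hrdef.symm hm hnc rfl
    have hmu' := mu_lt hm hMA
    rw [← S_move hm' hnc' hm hnc hMA]
    exact IH (mu n (unnest f p (p + 1) r q)) (by omega) _ hm' hnc' rfl
  · push_neg at hL
    rw [shorts_eq_a0 hm (no_long_shorts hm hL)]

end St10

namespace St10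

variable {n : ℕ}

lemma cls_chain (N : ℕ) : ∀ f, IsMatching n f → NonCrossing f → mu n f = N →
    ∀ u, u % 2 = 1 → 1 ≤ u → u + 1 ≤ 2 * n → f u = u + 1 →
    cls n f u = cls n (a0 n) u := by
  induction N using Nat.strong_induction_on with
  | _ N IH =>
  intro f hm hnc hmu u hodd hu1 hu2 hfu
  have hfu1 : f (u + 1) = u := arc_symm hm (by omega) hfu
  by_cases hL : ∃ p, 1 ≤ p ∧ p ≤ 2 * n ∧ p + 1 < f p ∧ p + 1 ≠ u
  · obtain ⟨p, hp1, hp2, hplong, hpu⟩ := hL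
    set q := f p with hq
    have hq2 : q ≤ 2 * n := (hm.1 p hp1 hp2).2.1
    have hpne : p ≠ u := by
      rintro rfl
      rw [hfu] at hq
      omega
    have hqne_u : q ≠ u := by
      intro h
      have := arc_symm hm (show p ≠ q by omega) hq.symm
      rw [h, hfu] at this
      omega
    have hqne_u1 : q ≠ u + 1 := by
      intro h
      have := arc_symm hm (show p ≠ q by omega) hq.symm
      rw [h, hfu1] at this
      omega
    have hr := inside hm hnc (show p < q by omega) hq.symm
      (show p < p + 1 by omega) (show p + 1 < q by omega)
    set r := f (p + 1) with hrdef
    have hrne : r ≠ p + 1 := (hm.1 (p + 1) (by omega) (by omega)).2.2.2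
    have h1 : p + 1 < r := by omega
    have h2 : r < q := hr.2
    have hrne_u : r ≠ u := by
      intro h
      have := arc_symm hm (show p + 1 ≠ r by omega) hrdef.symm
      rw [h, hfu] at this
      omega
    have hrne_u1 : r ≠ u + 1 := by
      intro h
      have := arc_symm hm (show p + 1 ≠ r by omega) hrdef.symm
      rw [h, hfu1] at this
      omega
    have hij : p < p + 1 := by omega
    have hMA := unnest_moveAt (n := n) hij h1 h2 hq.symm hrdef.symm hm
    have hm' := unnest_matching (n := n) hij h1 h2 hq.symm hrdef.symm hm
    have hnc' := unnest_nc_left (n := n) hij h1 h2 hq.symm hrdef.symm hm hnc rfl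
    have hmu' := mu_lt hm hMA
    have hrest := hMA.2.2.2.2.2.2.2.2.2.2.2
    have hfu' : unnest f p (p + 1) r q u = u + 1 := by
      rw [← hrest u (by simp only [Set.mem_insert_iff, Set.mem_singleton_iff]; omega), hfu]
    have hstep := cls_typeII hm' hnc' hm hnc ⟨p, p + 1, r, q, hMA⟩
      (show u < u + 1 by omega) hfu' hfu
    rw [← hstep]
    exact IH (mu n (unnest f p (p + 1) r q)) (by omega) _ hm' hnc' rfl u hodd hu1 hu2 hfu'
  · push_neg at hL
    by_cases hL2 : ∃ p, 1 ≤ p ∧ p ≤ 2 * n ∧ p + 1 < f p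
    · obtain ⟨p, hp1, hp2, hplong⟩ := hL2
      have hpu : p + 1 = u := hL p hp1 hp2 hplong
      set q := f p with hq
      have hq2 : q ≤ 2 * n := (hm.1 p hp1 hp2).2.1
      have hfq : f q = p := arc_symm hm (show p ≠ q by omega) hq.symm
      have hqne_u1 : q ≠ u + 1 := by
        intro h
        rw [h, hfu1] at hfq
        omega
      have hqgt : u + 2 ≤ q := by omega
      by_cases hq3 : q = u + 2
      · exfalso
        have H : ∀ m, 1 ≤ m → m ≤ 2 * n → m ≠ p → m ≠ q →
            f m = m + 1 ∨ f m = m - 1 := by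
          intro m h1 h2 hmp hmq
          obtain ⟨g1, g2, g3, g4⟩ := hm.1 m h1 h2
          rcases lt_trichotomy m (f m) with h | h | h
          · left
            by_contra hc
            have := hL m h1 h2 (by omega)
            omega
          · omega
          · right
            by_contra hc
            have hlong : f m + 1 < m := by omega
            have := hL (f m) g1 g2 (by rw [g3]; omega)
            have hpeq : f m = p := by omega
            rw [hpeq] at g3
            rw [← hq] at g3
            omega
        have C : ∀ s, u + 3 + 2 * s ≤ 2 * n → f (u + 3 + 2 * s) = u + 4 + 2 * s := by
          intro s
          induction s with
          | zero =>
            intro hb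
            rcases H (u + 3) (by omega) (by omega) (by omega) (by omega) with h | h
            · simpa using h
            · exfalso
              have h' : f (u + 3) = u + 2 := by omega
              have := arc_symm hm (by omega) h'
              rw [hq3] at hfq
              omega
          | succ s IHs =>
            intro hb
            have hb' : u + 3 + 2 * s ≤ 2 * n := by omega
            have hprev := IHs hb'
            have hsym := arc_symm hm (by omega) hprev
            rw [show u + 3 + 2 * (s + 1) = u + 5 + 2 * s by ring,
              show u + 4 + 2 * (s + 1) = u + 6 + 2 * s by ring]
            rcases H (u + 5 + 2 * s) (by omega) (by omega) (by omega) (by omega) with h | h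
            · omega
            · exfalso
              have h' : f (u + 5 + 2 * s) = u + 4 + 2 * s := by omega
              have := arc_symm hm (by omega) h'
              omega
        obtain ⟨s, hs⟩ : ∃ s, u + 3 + 2 * s = 2 * n := ⟨(2 * n - u - 3) / 2, by omega⟩
        have htop := C s (by omega)
        rw [hs] at htop
        have hb := (hm.1 (2 * n) (by omega) (le_refl _)).2.1
        omega
      · -- q ≥ u + 3 : right move
        have hq4 : u + 3 ≤ q := by omega
        set j' := f (q - 1) with hj'
        have hins := inside hm hnc (show p < q by omega) hq.symm
          (show p < q - 1 by omega) (show q - 1 < q by omega)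
        have hj'ne : j' ≠ q - 1 := (hm.1 (q - 1) (by omega) (by omega)).2.2.2
        have hj'lt : j' < q - 1 := by omega
        have hbj : f j' = q - 1 := arc_symm hm (by omega) hj'.symm
        have hj'u : j' ≠ u := by
          intro h
          rw [h, hfu] at hbj
          omega
        have hj'u1 : j' ≠ u + 1 := by
          intro h
          rw [h, hfu1] at hbj
          omega
        have hMA := unnest_moveAt (n := n) (show p < j' by omega) (show j' < q - 1 by omega)
          (show q - 1 < q by omega) hq.symm hbj hm
        have hm' := unnest_matching (n := n) (show p < j' by omega) (show j' < q - 1 by omega)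
          (show q - 1 < q by omega) hq.symm hbj hm
        have hnc' := unnest_nc_right (n := n) (show p < j' by omega) (show j' < q - 1 by omega)
          (show q - 1 < q by omega) hq.symm hbj hm hnc (by omega)
        have hmu' := mu_lt hm hMA
        have hrest := hMA.2.2.2.2.2.2.2.2.2.2.2
        have hfu' : unnest f p j' (q - 1) q u = u + 1 := by
          rw [← hrest u (by simp only [Set.mem_insert_iff, Set.mem_singleton_iff]; omega), hfu]
        have hstep := cls_typeII hm' hnc' hm hnc ⟨p, j', q - 1, q, hMA⟩
          (show u < u + 1 by omega) hfu' hfu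
        rw [← hstep]
        exact IH (mu n (unnest f p j' (q - 1) q)) (by omega) _ hm' hnc' rfl u hodd hu1 hu2 hfu'
    · push_neg at hL2
      rw [shorts_eq_a0 hm (no_long_shorts hm hL2)]

end St10

namespace St10

variable {n : ℕ}

lemma sum_range_two {β : Type*} [AddCommMonoid β] (h : ℕ → β) (m : ℕ) :
    ∑ i ∈ Finset.range (2 * m), h i = ∑ t ∈ Finset.range m, (h (2 * t) + h (2 * t + 1)) := by
  induction m with
  | zero => simp
  | succ m IH =>
    rw [show 2 * (m + 1) = 2 * m + 1 + 1 by ring, Finset.sum_range_succ, Finset.sum_range_succ,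
      Finset.sum_range_succ (f := fun t => h (2 * t) + h (2 * t + 1)), IH]
    abel

lemma S_a0 : S n (a0 n) = ∑ t ∈ Finset.range n, cls n (a0 n) (2 * t + 1) := by
  rw [S, show Finset.Icc 1 (2 * n) = Finset.Ico 1 (2 * n + 1) from (Finset.Ico_add_one_right_eq_Icc 1 (2 * n)),
    Finset.sum_Ico_eq_sum_range, show 2 * n + 1 - 1 = 2 * n by omega,
    sum_range_two (fun i => cls n (a0 n) (1 + i)) n]
  refine Finset.sum_congr rfl fun t ht => ?_
  rw [Finset.mem_range] at ht
  rw [show 1 + 2 * t = 2 * t + 1 by ring, show 1 + (2 * t + 1) = 2 * t + 2 by ring]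
  rw [cls_eq_zero (show ¬ 2 * t + 2 < a0 n (2 * t + 2) by
    rw [a0_even (by omega) (by omega) (by omega)]; omega)]
  rw [add_zero]

end St10


/-- The sum over all arcs `e` of a non-crossing matching `a` of the classes
`[(a,e)]` in `M/N` equals `[(1,2)] + [(3,4)] + ⋯ + [(2n-1,2n)]`, independent of `a`.
Here `c t` is any representative with outermost distinguished arc `{2t+1, 2t+2}`. -/
theorem stmt10 (n : ℕ) (a : ℕ → ℕ) (ha : IsMatching n a) (hnc : NonCrossing a)
    (c : ℕ → Idx n) (hc : ∀ t < n, (c t).1.2 = (2 * t + 1, 2 * t + 2)) :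
    ∑ i ∈ ((Finset.Icc 1 (2 * n)).filter (fun i => i < a i)).attach,
        Submodule.Quotient.mk (p := NSub n)
          (Finsupp.single
            (⟨(a, i.1, a i.1), ha, hnc, (Finset.mem_filter.mp i.2).2, rfl⟩ : Idx n)
            (1 : ℤ)) =
      ∑ t ∈ Finset.range n,
        Submodule.Quotient.mk (p := NSub n) (Finsupp.single (c t) (1 : ℤ)) := by
  have hLHS : (∑ i ∈ ((Finset.Icc 1 (2 * n)).filter (fun i => i < a i)).attach,
      Submodule.Quotient.mk (p := NSub n)
        (Finsupp.single
          (⟨(a, i.1, a i.1), ha, hnc, (Finset.mem_filter.mp i.2).2, rfl⟩ : Idx n)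
          (1 : ℤ))) = St10.S n a := by
    rw [show (∑ i ∈ ((Finset.Icc 1 (2 * n)).filter (fun i => i < a i)).attach,
        Submodule.Quotient.mk (p := NSub n)
          (Finsupp.single
            (⟨(a, i.1, a i.1), ha, hnc, (Finset.mem_filter.mp i.2).2, rfl⟩ : Idx n)
            (1 : ℤ))) =
        ∑ i ∈ ((Finset.Icc 1 (2 * n)).filter (fun i => i < a i)).attach,
          St10.cls n a i.1 from Finset.sum_congr rfl fun i _ => by
            rw [St10.cls, dif_pos ⟨ha, hnc, (Finset.mem_filter.mp i.2).2⟩]]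
    rw [Finset.sum_attach]
    rw [Finset.sum_filter_of_ne fun x hx hne => by
      by_contra hlt
      exact hne (St10.cls_eq_zero hlt)]
    rfl
  rw [hLHS, St10.S_chain (St10.mu n a) a ha hnc rfl, St10.S_a0]
  refine Finset.sum_congr rfl fun t ht => ?_
  rw [Finset.mem_range] at ht
  set P := c t with hPdef
  have hct : P.1.2 = (2 * t + 1, 2 * t + 2) := hc t ht
  have harc : P.1.1 (2 * t + 1) = 2 * t + 2 := by
    have h := P.2.2.2.2
    rw [hct] at h
    exact h
  have hPeq : P = (⟨(P.1.1, 2 * t + 1, 2 * t + 2), P.2.1, P.2.2.1,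
      by exact Nat.lt_succ_self _, harc⟩ : Idx n) := by
    refine Subtype.ext ?_
    show P.1 = (P.1.1, 2 * t + 1, 2 * t + 2)
    rw [show P.1 = (P.1.1, P.1.2) from rfl, hct]
  rw [← St10.cls_chain (St10.mu n P.1.1) P.1.1 P.2.1 P.2.2.1 rfl (2 * t + 1)
    (by omega) (by omega) (by omega) harc]
  rw [St10.cls_eq_mk P.2.1 P.2.2.1 (Nat.lt_succ_self _) harc, ← hPeq]
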